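/- arXiv:2205.14735 — 2 statements merged into one kernel-verified Lean document; each statement's English description precedes it below -/
import Mathlib

section
/- Necessity direction of the stability region theorem: if there exists a policy assigning each arriving request of client c to a route σ ∈ F_c such that all per-node and per-link resource-load queues are rate stable, then there exist probabilities {P_c(σ)} with Σ_{σ∈F_c} P_c(σ) = 1 such that for every node i and link (i,j): Σ_{c,σ} λ^(c)·ρ_i^(c,σ)·P_c(σ) ≤ C_i and Σ_{c,σ} λ^(c)·ρ_{ij}^(c,σ)·P_c(σ) ≤ C_{ij}. -/
open MeasureTheory Filter Finset

/-- Necessity direction of the stability region theorem. Clients `c` have routes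
`F_c = {σ | cl σ = c}` (finite, nonempty), per-packet resource loads `ρn i σ` on
nodes and `ρl e σ` on links, and capacities `Cn i`, `Cle e`. If some policy
(splitting arrivals `a σ t` among routes, with the total client-`c` arrivals having
long-run average rate `λ^(c)` a.s.) makes all node and link resource-load queues
`Q(t+1) = [Q(t) - C + Σ_σ ρ·a_σ(t)]^+` rate stable a.s., then there exist
probabilities `P(σ)` with `Σ_{σ∈F_c} P(σ) = 1` such that for every node `i` and link
`e`: `Σ_σ λ^(cl σ)·ρn i σ·P(σ) ≤ Cn i` and `Σ_σ λ^(cl σ)·ρl e σ·P(σ) ≤ Cle e`. -/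
theorem stability_region_necessity {Ω : Type*} [MeasurableSpace Ω]
    (μ : Measure Ω) [IsProbabilityMeasure μ]
    {Cl R Nd Lk : Type*} [Fintype Cl] [Fintype R] [Fintype Nd] [Fintype Lk]
    [DecidableEq Cl]
    (cl : R → Cl) (hsur : ∀ c : Cl, ∃ σ : R, cl σ = c)
    (lam : Cl → ℝ) (hlam : ∀ c, 0 ≤ lam c)
    (ρn : Nd → R → ℝ) (ρl : Lk → R → ℝ)
    (hρn : ∀ i σ, 0 ≤ ρn i σ) (hρl : ∀ e σ, 0 ≤ ρl e σ)
    (Cn : Nd → ℝ) (Cle : Lk → ℝ) (hCn : ∀ i, 0 < Cn i) (hCle : ∀ e, 0 < Cle e)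
    (a : R → ℕ → Ω → ℝ) (hann : ∀ σ t ω, 0 ≤ a σ t ω)
    (M : ℝ) (habdd : ∀ σ t ω, a σ t ω ≤ M)
    (hrate : ∀ c : Cl, ∀ᵐ ω ∂μ, Tendsto
      (fun T : ℕ =>
        (∑ t ∈ Finset.range T, ∑ σ ∈ Finset.univ.filter (fun σ => cl σ = c), a σ t ω)
          / (T : ℝ))
      atTop (nhds (lam c)))
    (Qn : Nd → ℕ → Ω → ℝ) (Ql : Lk → ℕ → Ω → ℝ)
    (hQn0 : ∀ i ω, Qn i 0 ω = 0) (hQl0 : ∀ e ω, Ql e 0 ω = 0)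
    (hdynN : ∀ i t ω,
      Qn i (t + 1) ω = max (Qn i t ω - Cn i + ∑ σ, ρn i σ * a σ t ω) 0)
    (hdynL : ∀ e t ω,
      Ql e (t + 1) ω = max (Ql e t ω - Cle e + ∑ σ, ρl e σ * a σ t ω) 0)
    (hstabN : ∀ i, ∀ᵐ ω ∂μ,
      Tendsto (fun T : ℕ => Qn i T ω / (T : ℝ)) atTop (nhds 0))
    (hstabL : ∀ e, ∀ᵐ ω ∂μ,
      Tendsto (fun T : ℕ => Ql e T ω / (T : ℝ)) atTop (nhds 0)) :
    ∃ P : R → ℝ, (∀ σ, 0 ≤ P σ) ∧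
      (∀ c : Cl, ∑ σ ∈ Finset.univ.filter (fun σ => cl σ = c), P σ = 1) ∧
      (∀ i : Nd, ∑ σ : R, lam (cl σ) * ρn i σ * P σ ≤ Cn i) ∧
      (∀ e : Lk, ∑ σ : R, lam (cl σ) * ρl e σ * P σ ≤ Cle e) := by
  classical
  choose s hs using hsur
  set M' : ℝ := max M 0 with hM'
  -- pick a good sample point ω
  have hae : ∀ᵐ ω ∂μ,
      (∀ c : Cl, Tendsto (fun T : ℕ =>
        (∑ t ∈ Finset.range T, ∑ σ ∈ Finset.univ.filter (fun σ => cl σ = c), a σ t ω)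
          / (T : ℝ)) atTop (nhds (lam c))) ∧
      (∀ i, Tendsto (fun T : ℕ => Qn i T ω / (T : ℝ)) atTop (nhds 0)) ∧
      (∀ e, Tendsto (fun T : ℕ => Ql e T ω / (T : ℝ)) atTop (nhds 0)) :=
    (ae_all_iff.2 hrate).and ((ae_all_iff.2 hstabN).and (ae_all_iff.2 hstabL))
  obtain ⟨ω, hω1, hω2, hω3⟩ := hae.exists
  -- time averages
  set A : ℕ → R → ℝ := fun T σ => (∑ t ∈ Finset.range T, a σ t ω) / (T : ℝ) with hA
  have hmem : ∀ T, A T ∈ Set.Icc (0 : R → ℝ) (fun _ => M') := by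
    intro T
    constructor
    · intro σ
      exact div_nonneg (Finset.sum_nonneg fun t _ => hann σ t ω) (Nat.cast_nonneg T)
    · intro σ
      rcases Nat.eq_zero_or_pos T with h | h
      · simp [hA, h, le_max_right M 0]
        exact le_max_right M 0
      · have hT : (0 : ℝ) < (T : ℝ) := by exact_mod_cast h
        have hsum : (∑ t ∈ Finset.range T, a σ t ω) ≤ M' * T := by
          calc (∑ t ∈ Finset.range T, a σ t ω)
              ≤ ∑ _t ∈ Finset.range T, M' :=
                Finset.sum_le_sum fun t _ => (habdd σ t ω).trans (le_max_left M 0)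
            _ = M' * T := by simp [mul_comm]
        exact (div_le_iff₀ hT).2 hsum
  obtain ⟨f, hfmem, φ, hφ, hφlim⟩ := isCompact_Icc.tendsto_subseq hmem
  have hf0 : ∀ σ, 0 ≤ f σ := fun σ => hfmem.1 σ
  have hcoord : ∀ σ, Tendsto (fun n => A (φ n) σ) atTop (nhds (f σ)) :=
    fun σ => ((continuous_apply σ).tendsto f).comp hφlim
  have hφtop : Tendsto φ atTop atTop := hφ.tendsto_atTop
  -- per-client rate identity
  have hsumc : ∀ c, ∑ σ ∈ Finset.univ.filter (fun σ => cl σ = c), f σ = lam c := by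
    intro c
    have h1 : Tendsto
        (fun n => ∑ σ ∈ Finset.univ.filter (fun σ => cl σ = c), A (φ n) σ)
        atTop (nhds (∑ σ ∈ Finset.univ.filter (fun σ => cl σ = c), f σ)) :=
      tendsto_finset_sum _ fun σ _ => hcoord σ
    have h2 : Tendsto
        (fun n => ∑ σ ∈ Finset.univ.filter (fun σ => cl σ = c), A (φ n) σ)
        atTop (nhds (lam c)) := by
      have h3 := (hω1 c).comp hφtop
      refine h3.congr fun n => ?_
      simp only [Function.comp, hA]
      rw [Finset.sum_comm, Finset.sum_div]
    exact tendsto_nhds_unique h1 h2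
  -- generic capacity bound from rate stability of a queue
  have key : ∀ (ρ : R → ℝ) (C : ℝ) (Q : ℕ → ℝ), Q 0 = 0 →
      (∀ t, Q (t + 1) = max (Q t - C + ∑ σ, ρ σ * a σ t ω) 0) →
      Tendsto (fun T : ℕ => Q T / (T : ℝ)) atTop (nhds 0) →
      ∑ σ, ρ σ * f σ ≤ C := by
    intro ρ C Q hQ0 hdyn hstab
    have hQge : ∀ T : ℕ,
        (∑ t ∈ Finset.range T, ∑ σ, ρ σ * a σ t ω) - (T : ℝ) * C ≤ Q T := by
      intro T
      induction T with
      | zero => simp [hQ0]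
      | succ T ih =>
        rw [hdyn T]
        refine le_max_of_le_left ?_
        rw [Finset.sum_range_succ]
        push_cast
        linarith
    have hlim1 : Tendsto (fun n => ∑ σ, ρ σ * A (φ n) σ) atTop
        (nhds (∑ σ, ρ σ * f σ)) :=
      tendsto_finset_sum _ fun σ _ => (hcoord σ).const_mul _
    have hlim2 : Tendsto (fun n => Q (φ n) / ((φ n : ℕ) : ℝ) + C) atTop
        (nhds (0 + C)) := (hstab.comp hφtop).add tendsto_const_nhds
    have hle : ∀ᶠ n in atTop,
        (fun n => ∑ σ, ρ σ * A (φ n) σ) n ≤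
        (fun n => Q (φ n) / ((φ n : ℕ) : ℝ) + C) n := by
      filter_upwards [hφtop.eventually_ge_atTop 1] with n hn
      have hT : (0 : ℝ) < ((φ n : ℕ) : ℝ) := by exact_mod_cast hn
      have h3 : ((∑ t ∈ Finset.range (φ n), ∑ σ, ρ σ * a σ t ω)
          - ((φ n : ℕ) : ℝ) * C) / ((φ n : ℕ) : ℝ) ≤ Q (φ n) / ((φ n : ℕ) : ℝ) := by
        gcongr
        exact hQge (φ n)
      have h4 : ((∑ t ∈ Finset.range (φ n), ∑ σ, ρ σ * a σ t ω)
          - ((φ n : ℕ) : ℝ) * C) / ((φ n : ℕ) : ℝ)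
          = (∑ t ∈ Finset.range (φ n), ∑ σ, ρ σ * a σ t ω) / ((φ n : ℕ) : ℝ) - C := by
        field_simp
      have h5 : ∑ σ, ρ σ * A (φ n) σ
          = (∑ t ∈ Finset.range (φ n), ∑ σ, ρ σ * a σ t ω) / ((φ n : ℕ) : ℝ) := by
        simp only [hA]
        rw [Finset.sum_comm, Finset.sum_div]
        simp_rw [← Finset.mul_sum, mul_div_assoc]
      rw [h5]
      linarith [h3, h4.symm ▸ h3]
    have := le_of_tendsto_of_tendsto hlim1 hlim2 hle
    linarith
  have hnode : ∀ i, ∑ σ, ρn i σ * f σ ≤ Cn i :=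
    fun i => key (ρn i) (Cn i) (fun T => Qn i T ω) (hQn0 i ω)
      (fun t => hdynN i t ω) (hω2 i)
  have hlink : ∀ e, ∑ σ, ρl e σ * f σ ≤ Cle e :=
    fun e => key (ρl e) (Cle e) (fun T => Ql e T ω) (hQl0 e ω)
      (fun t => hdynL e t ω) (hω3 e)
  -- construct the probabilities
  refine ⟨fun σ => if lam (cl σ) = 0 then (if σ = s (cl σ) then 1 else 0)
      else f σ / lam (cl σ), ?_, ?_, ?_, ?_⟩
  · intro σ
    dsimp only
    split_ifs with h1 h2
    · norm_num
    · norm_num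
    · exact div_nonneg (hf0 σ) (hlam _)
  · intro c
    by_cases hc : lam c = 0
    · rw [Finset.sum_congr rfl (g := fun σ => if σ = s c then (1 : ℝ) else 0)
        (fun σ hσ => by
          have hcσ : cl σ = c := (Finset.mem_filter.1 hσ).2
          simp [hcσ, hc])]
      rw [Finset.sum_ite_eq']
      simp [hs c]
    · rw [Finset.sum_congr rfl (g := fun σ => f σ / lam c)
        (fun σ hσ => by
          have hcσ : cl σ = c := (Finset.mem_filter.1 hσ).2
          simp [hcσ, hc])]
      rw [← Finset.sum_div, hsumc c, div_self hc]
  · intro i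
    calc ∑ σ : R, lam (cl σ) * ρn i σ *
          (if lam (cl σ) = 0 then (if σ = s (cl σ) then 1 else 0) else f σ / lam (cl σ))
        ≤ ∑ σ : R, ρn i σ * f σ := by
          refine Finset.sum_le_sum fun σ _ => ?_
          by_cases h : lam (cl σ) = 0
          · simp [h]
            exact mul_nonneg (hρn i σ) (hf0 σ)
          · rw [if_neg h]
            refine le_of_eq ?_
            field_simp
      _ ≤ Cn i := hnode i
  · intro e
    calc ∑ σ : R, lam (cl σ) * ρl e σ *
          (if lam (cl σ) = 0 then (if σ = s (cl σ) then 1 else 0) else f σ / lam (cl σ))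
        ≤ ∑ σ : R, ρl e σ * f σ := by
          refine Finset.sum_le_sum fun σ _ => ?_
          by_cases h : lam (cl σ) = 0
          · simp [h]
            exact mul_nonneg (hρl e σ) (hf0 σ)
          · rw [if_neg h]
            refine le_of_eq ?_
            field_simp
      _ ≤ Cle e := hlink e
end

section
/- Restricting to acyclic routes does not reduce the stability region: if an arrival vector λ is supported by route-selection probabilities over routes possibly containing cycles, then it is also supported by probabilities over cycle-free routes, since removing cycles from any route weakly decreases every resource load ρ_i^(c,σ) and ρ_{ij}^(c,σ). -/
open Finset

/-- `IsWalk E u v l`: `l` is a directed walk from `u` to `v` along edges of `E`. -/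
def IsWalk {V : Type*} (E : V → V → Prop) (u v : V) (l : List V) : Prop :=
  l.Chain' E ∧ l.head? = some u ∧ l.getLast? = some v

/-- Number of times the walk `l` traverses the edge `(i,j)` (with multiplicity). -/
def countEdge {V : Type*} [DecidableEq V] (l : List V) (i j : V) : ℕ :=
  (l.zip l.tail).count (i, j)

/-- A route (embedded router): processing location `p`, selected static source `v`,
and the live (`s → p`), static (`v → p`), and output (`p → d`) walks. -/
abbrev Route (V : Type*) := V × V × List V × List V × List V

/-- A valid route of a client with source `s`, destination `d`, static sources `Vk`. -/
def RouteOK {V : Type*} (E : V → V → Prop) (s d : V) (Vk : Set V) : Route V → Prop :=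
  fun ρ => ρ.2.1 ∈ Vk ∧ IsWalk E s ρ.1 ρ.2.2.1 ∧ IsWalk E ρ.2.1 ρ.1 ρ.2.2.2.1 ∧
    IsWalk E ρ.1 d ρ.2.2.2.2

/-- A cycle-free route: all three walks are node-repetition free. -/
def CycleFree {V : Type*} : Route V → Prop :=
  fun ρ => ρ.2.2.1.Nodup ∧ ρ.2.2.2.1.Nodup ∧ ρ.2.2.2.2.Nodup

/-- Processing load of a route on node `i`: `r · 1{processing happens at i}`. -/
def loadN {V : Type*} [DecidableEq V] (r : ℝ) (i : V) : Route V → ℝ :=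
  fun ρ => if ρ.1 = i then r else 0

/-- Transmission load of a route on link `(i,j)` (with multiplicity for walks):
`#live crossings + ζ·#static crossings + ξ·#output crossings`. -/
def loadL {V : Type*} [DecidableEq V] (zeta xi : ℝ) (i j : V) : Route V → ℝ :=
  fun ρ => (countEdge ρ.2.2.1 i j : ℝ) + zeta * (countEdge ρ.2.2.2.1 i j : ℝ)
    + xi * (countEdge ρ.2.2.2.2 i j : ℝ)

section Scrub
variable {V : Type*} [DecidableEq V]

/-- Remove cycles from a walk. -/
def scrub : List V → List V
  | [] => []
  | a :: t =>
      if a ∈ t then scrub (t.drop (t.idxOf a))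
      else a :: scrub t
termination_by l => l.length
decreasing_by
  · simp only [List.length_cons, List.length_drop]; omega
  · simp

lemma scrub_subset : ∀ l : List V, ∀ x ∈ scrub l, x ∈ l := by
  intro l
  induction l using scrub.induct with
  | case1 => simp [scrub]
  | case2 a t h ih =>
      intro x hx
      rw [scrub, if_pos h] at hx
      have := ih x hx
      exact List.mem_cons_of_mem a (List.mem_of_mem_drop this)
  | case3 a t h ih =>
      intro x hx
      rw [scrub, if_neg h] at hx
      rcases List.mem_cons.1 hx with hx | hx
      · simp [hx]
      · exact List.mem_cons_of_mem a (ih x hx)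

lemma scrub_nodup : ∀ l : List V, (scrub l).Nodup := by
  intro l
  induction l using scrub.induct with
  | case1 => simp [scrub]
  | case2 a t h ih => rw [scrub, if_pos h]; exact ih
  | case3 a t h ih =>
      rw [scrub, if_neg h]
      exact List.nodup_cons.2 ⟨fun hx => h (scrub_subset t a hx), ih⟩

lemma scrub_head? : ∀ l : List V, (scrub l).head? = l.head? := by
  intro l
  induction l using scrub.induct with
  | case1 => simp [scrub]
  | case2 a t h ih =>
      rw [scrub, if_pos h, ih]
      rw [List.head?_drop, List.getElem?_eq_getElem (List.idxOf_lt_length_iff.2 h),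
        List.getElem_idxOf]
      rfl
  | case3 a t h ih => rw [scrub, if_neg h]; simp

lemma scrub_getLast? : ∀ l : List V, (scrub l).getLast? = l.getLast? := by
  intro l
  induction l using scrub.induct with
  | case1 => simp [scrub]
  | case2 a t h ih =>
      rw [scrub, if_pos h, ih]
      have hlt := List.idxOf_lt_length_iff.2 h
      have hd : t.drop (t.idxOf a) ≠ [] := by
        simp [List.drop_eq_nil_iff]; omega
      have : t = t.take (t.idxOf a) ++ t.drop (t.idxOf a) := (List.take_append_drop _ _).symm
      calc (t.drop (t.idxOf a)).getLast? = t.getLast? := by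
            conv_rhs => rw [this]
            rw [List.getLast?_append]
            cases hg : (t.drop (t.idxOf a)).getLast? with
            | none => exact absurd (List.getLast?_eq_none_iff.1 hg) hd
            | some x => simp
        _ = (a :: t).getLast? := by
            have ht : t ≠ [] := List.ne_nil_of_mem h
            rw [show a :: t = [a] ++ t from rfl, List.getLast?_append]
            cases hg : t.getLast? with
            | none => exact absurd (List.getLast?_eq_none_iff.1 hg) ht
            | some x => simp
  | case3 a t h ih =>
      rw [scrub, if_neg h]
      rcases eq_or_ne t ([] : List V) with rfl | ht
      · simp [scrub]
      · have hs : scrub t ≠ [] := by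
          intro hc
          have h2 := scrub_head? t
          rw [hc] at h2
          exact ht (List.head?_eq_none_iff.1 h2.symm)
        rw [show a :: scrub t = [a] ++ scrub t from rfl, List.getLast?_append,
          show a :: t = [a] ++ t from rfl, List.getLast?_append, ih]

lemma scrub_chain' {E : V → V → Prop} : ∀ l : List V, l.Chain' E → (scrub l).Chain' E := by
  intro l
  induction l using scrub.induct with
  | case1 => simp [scrub]
  | case2 a t h ih =>
      intro hc
      rw [scrub, if_pos h]
      exact ih ((hc.tail).suffix (List.drop_suffix _ _))
  | case3 a t h ih =>
      intro hc
      rw [scrub, if_neg h]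
      simp only [List.Chain', List.isChain_cons] at hc ⊢
      refine ⟨fun y hy => hc.1 y ?_, ih hc.2⟩
      rwa [scrub_head?] at hy

lemma countEdge_cons_le (a : V) (t : List V) (i j : V) :
    countEdge t i j ≤ countEdge (a :: t) i j := by
  cases t with
  | nil => simp [countEdge]
  | cons b t' =>
      simp only [countEdge, List.tail_cons, List.zip_cons_cons, List.count_cons]
      omega

lemma countEdge_drop_le (l : List V) (n : ℕ) (i j : V) :
    countEdge (l.drop n) i j ≤ countEdge l i j := by
  induction l generalizing n with
  | nil => simp
  | cons a t ih =>
      cases n with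
      | zero => simp
      | succ m =>
          calc countEdge ((a :: t).drop (m+1)) i j = countEdge (t.drop m) i j := rfl
            _ ≤ countEdge t i j := ih m
            _ ≤ countEdge (a :: t) i j := countEdge_cons_le a t i j

lemma countEdge_scrub_le : ∀ l : List V, ∀ i j : V, countEdge (scrub l) i j ≤ countEdge l i j := by
  intro l
  induction l using scrub.induct with
  | case1 => simp [scrub]
  | case2 a t h ih =>
      intro i j
      rw [scrub, if_pos h]
      calc countEdge (scrub (t.drop (t.idxOf a))) i j
          ≤ countEdge (t.drop (t.idxOf a)) i j := ih i j
        _ ≤ countEdge t i j := countEdge_drop_le t _ i j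
        _ ≤ countEdge (a :: t) i j := countEdge_cons_le a t i j
  | case3 a t h ih =>
      intro i j
      rw [scrub, if_neg h]
      cases t with
      | nil => simp [scrub, countEdge]
      | cons b t' =>
          have hhd : (scrub (b :: t')).head? = some b := by rw [scrub_head?]; rfl
          obtain ⟨u, hu⟩ : ∃ u, scrub (b :: t') = b :: u := by
            cases hs : scrub (b :: t') with
            | nil => rw [hs] at hhd; simp at hhd
            | cons c u => rw [hs] at hhd; simp at hhd; exact ⟨u, by rw [hhd]⟩
          rw [hu]
          have h1 : countEdge (a :: b :: u) i j
              = (if (a, b) = (i, j) then 1 else 0) + countEdge (b :: u) i j := by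
            simp [countEdge, List.count_cons]; split <;> omega
          have h2 : countEdge (a :: b :: t') i j
              = (if (a, b) = (i, j) then 1 else 0) + countEdge (b :: t') i j := by
            simp [countEdge, List.count_cons]; split <;> omega
          rw [h1, h2]
          have := ih i j
          rw [hu] at this
          omega

end Scrub

section RouteAux
variable {V : Type*} [DecidableEq V]

lemma scrub_isWalk {E : V → V → Prop} {u v : V} {l : List V} (h : IsWalk E u v l) :
    IsWalk E u v (scrub l) :=
  ⟨scrub_chain' l h.1, (scrub_head? l).trans h.2.1, (scrub_getLast? l).trans h.2.2⟩

/-- Remove cycles from all three walks of a route. -/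
def scrubRoute (ρ : Route V) : Route V :=
  (ρ.1, ρ.2.1, scrub ρ.2.2.1, scrub ρ.2.2.2.1, scrub ρ.2.2.2.2)

lemma scrubRoute_routeOK {E : V → V → Prop} {s d : V} {Vk : Set V} {ρ : Route V}
    (h : RouteOK E s d Vk ρ) : RouteOK E s d Vk (scrubRoute ρ) :=
  ⟨h.1, scrub_isWalk h.2.1, scrub_isWalk h.2.2.1, scrub_isWalk h.2.2.2⟩

lemma scrubRoute_cycleFree (ρ : Route V) : CycleFree (scrubRoute ρ) :=
  ⟨scrub_nodup _, scrub_nodup _, scrub_nodup _⟩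

lemma loadN_scrubRoute (r : ℝ) (i : V) (ρ : Route V) :
    loadN r i (scrubRoute ρ) = loadN r i ρ := rfl

lemma loadL_nonneg {zeta xi : ℝ} (hz : 0 ≤ zeta) (hx : 0 ≤ xi) (i j : V) (ρ : Route V) :
    0 ≤ loadL zeta xi i j ρ := by
  unfold loadL
  positivity

lemma loadL_scrubRoute_le {zeta xi : ℝ} (hz : 0 ≤ zeta) (hx : 0 ≤ xi) (i j : V) (ρ : Route V) :
    loadL zeta xi i j (scrubRoute ρ) ≤ loadL zeta xi i j ρ := by
  unfold loadL scrubRoute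
  gcongr <;> exact_mod_cast countEdge_scrub_le _ i j

end RouteAux

/-- Fiberwise summation over a map. -/
lemma hasSum_fiberwise_real {α β : Type*} (F : α → β) {g : α → ℝ} (hg : Summable g) :
    HasSum (fun b => ∑' a : F ⁻¹' {b}, g a) (∑' a, g a) :=
  hg.hasSum.tsum_fiberwise F

/-- Restricting to acyclic routes does not reduce the stability region: if an arrival
vector `λ` is supported by route-selection probabilities over (possibly cyclic)
routes satisfying the node and link capacity constraints, then it is also supported
by probabilities over cycle-free routes (removing cycles from any route weakly
decreases every resource load). -/
theorem acyclic_routes_suffice {V Cl : Type*} [Fintype V] [DecidableEq V] [Fintype Cl]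
    (E : V → V → Prop) (s d : Cl → V) (Vk : Cl → Set V)
    (r zeta xi : Cl → ℝ) (hr : ∀ c, 0 ≤ r c) (hzeta : ∀ c, 0 ≤ zeta c)
    (hxi : ∀ c, 0 ≤ xi c)
    (lam : Cl → ℝ) (hlam : ∀ c, 0 ≤ lam c)
    (Cn : V → ℝ) (Cle : V → V → ℝ)
    (P : Cl → Route V → ℝ)
    (hPnn : ∀ c ρ, 0 ≤ P c ρ)
    (hPsupp : ∀ c ρ, P c ρ ≠ 0 → RouteOK E (s c) (d c) (Vk c) ρ)
    (hPsum : ∀ c, Summable (P c))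
    (hP1 : ∀ c, (∑' ρ : Route V, P c ρ) = 1)
    (hSumN : ∀ c i, Summable (fun ρ => loadN (r c) i ρ * P c ρ))
    (hSumL : ∀ c i j, Summable (fun ρ => loadL (zeta c) (xi c) i j ρ * P c ρ))
    (hCapN : ∀ i : V,
      ∑ c : Cl, lam c * ∑' ρ : Route V, loadN (r c) i ρ * P c ρ ≤ Cn i)
    (hCapL : ∀ i j : V,
      ∑ c : Cl, lam c * ∑' ρ : Route V, loadL (zeta c) (xi c) i j ρ * P c ρ
        ≤ Cle i j) :
    ∃ P' : Cl → Route V → ℝ,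
      (∀ c ρ, 0 ≤ P' c ρ) ∧
      (∀ c ρ, P' c ρ ≠ 0 → RouteOK E (s c) (d c) (Vk c) ρ ∧ CycleFree ρ) ∧
      (∀ c, Summable (P' c)) ∧
      (∀ c, (∑' ρ : Route V, P' c ρ) = 1) ∧
      (∀ c i, Summable (fun ρ => loadN (r c) i ρ * P' c ρ)) ∧
      (∀ c i j, Summable (fun ρ => loadL (zeta c) (xi c) i j ρ * P' c ρ)) ∧
      (∀ i : V,
        ∑ c : Cl, lam c * ∑' ρ : Route V, loadN (r c) i ρ * P' c ρ ≤ Cn i) ∧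
      (∀ i j : V,
        ∑ c : Cl, lam c * ∑' ρ : Route V, loadL (zeta c) (xi c) i j ρ * P' c ρ
          ≤ Cle i j) := by
  classical
  set F : Route V → Route V := scrubRoute with hF
  refine ⟨fun c ρ => ∑' σ : F ⁻¹' {ρ}, P c σ, ?_, ?_, ?_, ?_, ?_, ?_, ?_, ?_⟩
  · intro c ρ
    exact tsum_nonneg fun σ => hPnn c σ
  · intro c ρ hne
    by_contra hcon
    apply hne
    have hz : ∀ σ : ↥(F ⁻¹' {ρ}), P c σ = 0 := by
      rintro ⟨σ, hσ⟩
      by_contra hPσ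
      have hok := hPsupp c σ hPσ
      have : RouteOK E (s c) (d c) (Vk c) (F σ) ∧ CycleFree (F σ) :=
        ⟨scrubRoute_routeOK hok, scrubRoute_cycleFree σ⟩
      rw [Set.mem_preimage, Set.mem_singleton_iff] at hσ
      rw [hσ] at this
      exact hcon this
    exact (tsum_congr hz).trans tsum_zero
  · intro c
    exact (hasSum_fiberwise_real F (hPsum c)).summable
  · intro c
    exact (hasSum_fiberwise_real F (hPsum c)).tsum_eq.trans (hP1 c)
  all_goals
    have key : ∀ (c : Cl) (h : Route V → ℝ), Summable (fun σ => h (F σ) * P c σ) →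
        HasSum (fun ρ => h ρ * ∑' σ : F ⁻¹' {ρ}, P c σ) (∑' σ, h (F σ) * P c σ) := by
      intro c h hs
      have h1 := hasSum_fiberwise_real F hs
      have h2 : (fun ρ => h ρ * ∑' σ : F ⁻¹' {ρ}, P c σ)
          = fun ρ => ∑' σ : F ⁻¹' {ρ}, h (F σ) * P c σ := by
        funext ρ
        rw [← tsum_mul_left]
        exact tsum_congr fun σ => by
          rw [show F σ.1 = ρ from σ.2]
      rw [h2]
      exact h1
  · -- Summable node loads
    intro c i
    exact (key c (loadN (r c) i) (hSumN c i)).summable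
  · -- Summable link loads
    intro c i j
    refine (key c (loadL (zeta c) (xi c) i j) ?_).summable
    refine Summable.of_nonneg_of_le
      (fun σ => mul_nonneg (loadL_nonneg (hzeta c) (hxi c) i j _) (hPnn c σ))
      (fun σ => mul_le_mul_of_nonneg_right
        (loadL_scrubRoute_le (hzeta c) (hxi c) i j σ) (hPnn c σ)) (hSumL c i j)
  · -- node capacity
    intro i
    refine le_trans (le_of_eq ?_) (hCapN i)
    refine Finset.sum_congr rfl fun c _ => ?_
    congr 1
    rw [(key c (loadN (r c) i) (hSumN c i)).tsum_eq]
    exact tsum_congr fun σ => by rw [hF, loadN_scrubRoute]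
  · -- link capacity
    intro i j
    refine le_trans ?_ (hCapL i j)
    refine Finset.sum_le_sum fun c _ => ?_
    refine mul_le_mul_of_nonneg_left ?_ (hlam c)
    have hnn : ∀ σ, 0 ≤ loadL (zeta c) (xi c) i j (F σ) * P c σ :=
      fun σ => mul_nonneg (loadL_nonneg (hzeta c) (hxi c) i j _) (hPnn c σ)
    have hle : ∀ σ, loadL (zeta c) (xi c) i j (F σ) * P c σ
        ≤ loadL (zeta c) (xi c) i j σ * P c σ :=
      fun σ => mul_le_mul_of_nonneg_right
        (loadL_scrubRoute_le (hzeta c) (hxi c) i j σ) (hPnn c σ)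
    have hsum : Summable (fun σ => loadL (zeta c) (xi c) i j (F σ) * P c σ) :=
      Summable.of_nonneg_of_le hnn hle (hSumL c i j)
    rw [(key c (loadL (zeta c) (xi c) i j) hsum).tsum_eq]
    exact hsum.tsum_le_tsum hle (hSumL c i j)
end
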